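/- Let $I, I' \subseteq \mathbb{R}$ be bounded open intervals and let $f_k : I \to I'$ ($k \in \mathbb{N}$) be a sequence of decreasing (antitone) functions. Set $f := \limsup_{k\to\infty} f_k$ (pointwise). If $\lim_{k\to\infty} \int_I f_k \, d\lambda = \int_I f \, d\lambda$ (with respect to Lebesgue measure), then at every point $x \in I$ at which $f$ is right-continuous, the limit $\lim_{k\to\infty} f_k(x)$ exists and equals $f(x)$. In particular, $f_k \to f$ almost everywhere on $I$. -/

import Mathlib

open MeasureTheory Filter Topology

lemma aux_fatou {α : Type*} [MeasurableSpace α] {μ : Measure α} [IsFiniteMeasure μ]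
    (g : ℕ → α → ℝ) (c C : ℝ)
    (hmeas : ∀ n, AEStronglyMeasurable (g n) μ)
    (hbd : ∀ n, ∀ᵐ x ∂μ, g n x ∈ Set.Icc c C)
    (h0 : ∀ᵐ x ∂μ, 0 ≤ atTop.liminf fun n => g n x) :
    0 ≤ atTop.liminf fun n => ∫ x, g n x ∂μ := by
  by_contra hL
  push_neg at hL
  set m : ℝ := (μ Set.univ).toReal with hm
  have hm0 : 0 ≤ m := ENNReal.toReal_nonneg
  set L : ℝ := atTop.liminf fun n => ∫ x, g n x ∂μ with hLdef
  -- m > 0, else all integrals vanish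
  have hmpos : 0 < m := by
    rcases hm0.lt_or_eq with h | h
    · exact h
    · exfalso
      have hμ0 : μ = 0 := by
        have := (ENNReal.toReal_eq_zero_iff _).mp h.symm
        rcases this with h' | h'
        · exact Measure.measure_univ_eq_zero.mp h'
        · exact absurd h' (measure_ne_top μ _)
      rw [hLdef] at hL
      simp [hμ0] at hL
  set ε : ℝ := -L / (2 * m) with hε
  have hεpos : 0 < ε := div_pos (by linarith) (by positivity)
  have hLval : L = -(2 * ε * m) := by
    rw [hε, show 2 * (-L / (2 * m)) * m = -L / (2 * m) * (2 * m) by ring,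
      div_mul_cancel₀ _ (mul_ne_zero two_ne_zero hmpos.ne')]; ring
  set c₀ : ℝ := min c (-(2 * ε)) with hc₀
  have hc₀le : c₀ ≤ -(2 * ε) := min_le_right _ _
  have hbd' : ∀ n, ∀ᵐ x ∂μ, g n x ∈ Set.Icc c₀ C := by
    intro n
    filter_upwards [hbd n] with x hx
    exact ⟨le_trans (min_le_left _ _) hx.1, hx.2⟩
  have hint : ∀ n, Integrable (g n) μ := by
    intro n
    refine Integrable.mono' (integrable_const (max |c₀| |C|)) (hmeas n) ?_
    filter_upwards [hbd' n] with x hx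
    rw [Real.norm_eq_abs]
    rcases abs_cases (g n x) with ⟨h1, _⟩ | ⟨h1, _⟩
    · rw [h1]; exact le_trans hx.2 (le_trans (le_abs_self _) (le_max_right _ _))
    · rw [h1]
      exact le_trans (by linarith [hx.1] : -g n x ≤ -c₀)
        (le_trans (neg_le_abs _) (le_max_left _ _))
  -- the lintegral identity
  have key1 : ∀ n, ∫⁻ x, ENNReal.ofReal (g n x - c₀) ∂μ
      = ENNReal.ofReal ((∫ x, g n x ∂μ) - c₀ * m) := by
    intro n
    have hi : Integrable (fun x => g n x - c₀) μ := (hint n).sub (integrable_const c₀)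
    have h2 := ofReal_integral_eq_lintegral_ofReal hi
      (by filter_upwards [hbd' n] with x hx; simp only [Pi.zero_apply]; linarith [hx.1])
    rw [← h2]
    congr 1
    rw [integral_sub (hint n) (integrable_const c₀), integral_const]
    simp [hm, smul_eq_mul, mul_comm, Measure.real]
  -- pointwise liminf lower bound
  have hptwise : ∀ᵐ x ∂μ, ENNReal.ofReal (-ε - c₀)
      ≤ atTop.liminf fun n => ENNReal.ofReal (g n x - c₀) := by
    have hall : ∀ᵐ x ∂μ, ∀ n, g n x ∈ Set.Icc c₀ C := ae_all_iff.mpr hbd'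
    filter_upwards [h0, hall] with x hx hxall
    have hcob : IsBoundedUnder (· ≥ ·) atTop fun n => g n x :=
      isBoundedUnder_of ⟨c₀, fun k => (hxall k).1⟩
    have hev : ∀ᶠ n in atTop, -ε < g n x :=
      eventually_lt_of_lt_liminf (lt_of_lt_of_le (by linarith) hx) hcob
    refine le_liminf_of_le (by isBoundedDefault) ?_
    filter_upwards [hev] with n hn
    exact ENNReal.ofReal_le_ofReal (by linarith)
  -- Fatou
  have hfatou : ENNReal.ofReal (-ε - c₀) * μ Set.univ
      ≤ atTop.liminf fun n => ∫⁻ x, ENNReal.ofReal (g n x - c₀) ∂μ := by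
    calc ENNReal.ofReal (-ε - c₀) * μ Set.univ
        = ∫⁻ _, ENNReal.ofReal (-ε - c₀) ∂μ := (lintegral_const _).symm
      _ ≤ ∫⁻ x, atTop.liminf (fun n => ENNReal.ofReal (g n x - c₀)) ∂μ :=
          lintegral_mono_ae hptwise
      _ ≤ _ := lintegral_liminf_le' fun n =>
          ((hmeas n).aemeasurable.sub aemeasurable_const).ennreal_ofReal
  -- frequent upper bound
  have hfreq : ∃ᶠ n in atTop, (∫ x, g n x ∂μ) < -(3/2 * ε * m) := by
    have hcob : IsCoboundedUnder (· ≥ ·) atTop fun n => ∫ x, g n x ∂μ := by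
      refine IsBoundedUnder.isCoboundedUnder_ge (isBoundedUnder_of ⟨C * m, fun k => ?_⟩)
      calc ∫ x, g k x ∂μ ≤ ∫ _, C ∂μ :=
            integral_mono_ae (hint k) (integrable_const C)
              (by filter_upwards [hbd k] with x hx using hx.2)
        _ = C * m := by rw [integral_const]; simp [hm, smul_eq_mul, mul_comm, Measure.real]
    refine frequently_lt_of_liminf_lt hcob ?_
    rw [← hLdef, hLval]
    nlinarith
  have hupper : (atTop.liminf fun n => ∫⁻ x, ENNReal.ofReal (g n x - c₀) ∂μ)
      ≤ ENNReal.ofReal ((-(3/2 * ε) - c₀) * m) := by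
    refine liminf_le_of_frequently_le' ?_
    refine hfreq.mono fun n hn => ?_
    rw [key1 n]
    exact ENNReal.ofReal_le_ofReal (by nlinarith)
  -- combine
  have hμuniv : μ Set.univ = ENNReal.ofReal m := by
    rw [hm, ENNReal.ofReal_toReal (measure_ne_top μ _)]
  rw [hμuniv, ← ENNReal.ofReal_mul (by linarith)] at hfatou
  have hcomb := le_trans hfatou hupper
  rw [ENNReal.ofReal_le_ofReal_iff (by nlinarith)] at hcomb
  nlinarith

lemma aux_liminf {u : ℕ → ℝ} {c C L : ℝ} (h1 : ∀ n, c ≤ u n) (h2 : ∀ n, u n ≤ C)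
    (h : atTop.limsup u ≤ L) {φ : ℕ → ℕ} (hφ : StrictMono φ) :
    0 ≤ atTop.liminf fun j => L - u (φ j) := by
  by_contra h'
  push_neg at h'
  set M := atTop.liminf fun j => L - u (φ j) with hM
  have hev : ∀ᶠ k in atTop, u k < L - M / 2 :=
    eventually_lt_of_limsup_lt (lt_of_le_of_lt h (by linarith))
      (isBoundedUnder_of ⟨C, h2⟩)
  have hev2 : ∀ᶠ j in atTop, M / 2 ≤ L - u (φ j) := by
    filter_upwards [hφ.tendsto_atTop.eventually hev] with j hj
    linarith
  have : M / 2 ≤ M :=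
    le_liminf_of_le ((isBoundedUnder_of
      ⟨L - c, fun j => by have := h1 (φ j); linarith⟩ :
        IsBoundedUnder (· ≤ ·) atTop fun j => L - u (φ j)).isCoboundedUnder_ge) hev2
  linarith

lemma aux_int {g : ℝ → ℝ} {s : Set ℝ} (hs : MeasurableSet s) (hfin : volume s ≠ ⊤)
    (hg : AntitoneOn g s) {c C : ℝ} (hbd : ∀ x ∈ s, g x ∈ Set.Icc c C) :
    IntegrableOn g s := by
  have hm := aemeasurable_restrict_of_antitoneOn (μ := volume) hs hg
  refine Integrable.mono' (g := fun _ => max |c| |C|) ?_ hm.aestronglyMeasurable ?_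
  · exact integrableOn_const hfin
  · rw [ae_restrict_iff' hs]
    refine Eventually.of_forall fun x hx => ?_
    rw [Real.norm_eq_abs]
    exact abs_le_max_abs_abs (hbd x hx).1 (hbd x hx).2

/-- Lemma 5.2 of the paper: if a sequence of decreasing functions `f k : I → I'` between
bounded open intervals satisfies convergence of integrals to the integral of the pointwise
limsup `F`, then `f k → F` at every right-continuity point of `F`, hence a.e. -/
theorem stmt0
    (a b a' b' : ℝ) (hab : a < b)
    (f : ℕ → ℝ → ℝ)
    (hmap : ∀ k, ∀ x ∈ Set.Ioo a b, f k x ∈ Set.Ioo a' b')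
    (hanti : ∀ k, ∀ x ∈ Set.Ioo a b, ∀ y ∈ Set.Ioo a b, x ≤ y → f k y ≤ f k x)
    (F : ℝ → ℝ) (hF : ∀ x, F x = Filter.limsup (fun k => f k x) atTop)
    (hint : Tendsto (fun k => ∫ x in Set.Ioo a b, f k x) atTop
      (𝓝 (∫ x in Set.Ioo a b, F x))) :
    (∀ x ∈ Set.Ioo a b,
        ContinuousWithinAt F (Set.Ici x) x →
        Tendsto (fun k => f k x) atTop (𝓝 (F x))) ∧
    (∀ᵐ x ∂(volume.restrict (Set.Ioo a b)),
        Tendsto (fun k => f k x) atTop (𝓝 (F x))) := by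
  set I := Set.Ioo a b with hI
  have hImeas : MeasurableSet I := measurableSet_Ioo
  have hIfin : volume I ≠ ⊤ := by
    rw [hI, Real.volume_Ioo]; exact ENNReal.ofReal_ne_top
  have hab' : a' < b' := by
    have := hmap 0 ((a + b) / 2) ⟨by linarith, by linarith⟩
    exact lt_trans this.1 this.2
  have hbddle : ∀ x ∈ I, IsBoundedUnder (· ≤ ·) atTop fun k => f k x :=
    fun x hx => isBoundedUnder_of ⟨b', fun k => (hmap k x hx).2.le⟩
  have hbddge : ∀ x ∈ I, IsBoundedUnder (· ≥ ·) atTop fun k => f k x :=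
    fun x hx => isBoundedUnder_of ⟨a', fun k => (hmap k x hx).1.le⟩
  have hFmem : ∀ x ∈ I, F x ∈ Set.Icc a' b' := by
    intro x hx
    rw [hF x]
    constructor
    · exact le_limsup_of_frequently_le
        ((Eventually.of_forall fun k => (hmap k x hx).1.le).frequently) (hbddle x hx)
    · exact limsup_le_of_le ((hbddge x hx).isCoboundedUnder_le)
        (Eventually.of_forall fun k => (hmap k x hx).2.le)
  have hFanti : AntitoneOn F I := by
    intro x hx y hy hxy
    rw [hF x, hF y]
    exact limsup_le_limsup (Eventually.of_forall fun k => hanti k x hx y hy hxy)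
      ((hbddge y hy).isCoboundedUnder_le) (hbddle x hx)
  have hfanti : ∀ k, AntitoneOn (f k) I := fun k x hx y hy hxy => hanti k x hx y hy hxy
  have hfint : ∀ k, IntegrableOn (f k) I := fun k =>
    aux_int hImeas hIfin (hfanti k) fun x hx => ⟨(hmap k x hx).1.le, (hmap k x hx).2.le⟩
  have hFint : IntegrableOn F I := aux_int hImeas hIfin hFanti hFmem
  have main : ∀ x ∈ I, ContinuousWithinAt F (Set.Ici x) x →
      Tendsto (fun k => f k x) atTop (𝓝 (F x)) := by
    intro x hx hcont
    refine tendsto_of_le_liminf_of_limsup_le ?_ (hF x).symm.le (hbddle x hx) (hbddge x hx)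
    by_contra hlt
    push_neg at hlt
    obtain ⟨c, hc1, hc2⟩ := exists_between hlt
    have hfreq : ∃ᶠ k in atTop, f k x < c :=
      frequently_lt_of_liminf_lt ((hbddle x hx).isCoboundedUnder_ge) hc1
    obtain ⟨φ, hφmono, hφ⟩ := extraction_of_frequently_atTop hfreq
    set c' : ℝ := (c + F x) / 2 with hc'
    have hcc' : c < c' := by rw [hc']; linarith
    have hc'F : c' < F x := by rw [hc']; linarith
    -- neighborhood where F > c'
    have hmem : {y | y ∈ I ∧ c' < F y} ∈ 𝓝[Set.Ici x] x := by
      have h1 : ∀ᶠ y in 𝓝[Set.Ici x] x, c' < F y := hcont (Ioi_mem_nhds hc'F)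
      have h2 : I ∈ 𝓝[Set.Ici x] x := nhdsWithin_le_nhds (isOpen_Ioo.mem_nhds hx)
      filter_upwards [h1, h2] with y hy1 hy2
      exact ⟨hy2, hy1⟩
    obtain ⟨u, hu, hsub⟩ := mem_nhdsGE_iff_exists_Ico_subset.mp hmem
    rw [Set.mem_Ioi] at hu
    set E := Set.Ioo x u with hE
    have hEsub : E ⊆ I := fun y hy => (hsub ⟨hy.1.le, hy.2⟩).1
    have hEF : ∀ y ∈ E, c' < F y := fun y hy => (hsub ⟨hy.1.le, hy.2⟩).2
    set S := I \ E with hS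
    have hSsub : S ⊆ I := Set.diff_subset
    have hEmeas : MeasurableSet E := measurableSet_Ioo
    have hSmeas : MeasurableSet S := hImeas.diff hEmeas
    have hSfin : volume S ≠ ⊤ := fun h =>
      hIfin (eq_top_iff.mpr (h ▸ measure_mono hSsub))
    have hunion : E ∪ S = I := Set.union_diff_cancel hEsub
    have hdisj : Disjoint E S := Set.disjoint_sdiff_right
    set r : ℝ := (c' - c) * (u - x) with hr
    have hrpos : 0 < r := by
      apply mul_pos <;> linarith
    have hintE : ∀ j, IntegrableOn (fun y => F y - f (φ j) y) E :=
      fun j => IntegrableOn.mono_set (hFint.sub (hfint (φ j))) hEsub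
    have hintS : ∀ j, IntegrableOn (fun y => F y - f (φ j) y) S :=
      fun j => IntegrableOn.mono_set (hFint.sub (hfint (φ j))) hSsub
    have hEbound : ∀ j, r ≤ ∫ y in E, (F y - f (φ j) y) := by
      intro j
      have hle : ∀ y ∈ E, c' - c ≤ F y - f (φ j) y := by
        intro y hy
        have h1 := hEF y hy
        have h2 : f (φ j) y ≤ f (φ j) x := hanti (φ j) x hx y (hEsub hy) hy.1.le
        have h3 := hφ j
        linarith
      have := setIntegral_ge_of_const_le hEmeas
        (by rw [hE, Real.volume_Ioo]; exact ENNReal.ofReal_ne_top) hle (hintE j)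
      rw [Measure.real, Real.volume_Ioo, ENNReal.toReal_ofReal (by linarith : (0:ℝ) ≤ u - x),
        smul_eq_mul] at this
      rw [hr, mul_comm]; exact this
    have hDten : Tendsto (fun j => ∫ y in I, (F y - f (φ j) y)) atTop (𝓝 0) := by
      have h1 : ∀ k, ∫ y in I, (F y - f k y) = (∫ y in I, F y) - ∫ y in I, f k y :=
        fun k => integral_sub hFint (hfint k)
      have h2 : Tendsto (fun k => (∫ y in I, F y) - ∫ y in I, f k y) atTop
          (𝓝 ((∫ y in I, F y) - ∫ y in I, F y)) := (Tendsto.const_sub _ hint)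
      rw [sub_self] at h2
      have h3 := h2.comp hφmono.tendsto_atTop
      simpa only [Function.comp_def, ← h1] using h3
    haveI : IsFiniteMeasure (volume.restrict S) := ⟨by
      rw [Measure.restrict_apply_univ]; exact hSfin.lt_top.trans_le le_top⟩
    have hfatou : 0 ≤ atTop.liminf fun j => ∫ y in S, (F y - f (φ j) y) := by
      refine aux_fatou (fun j y => F y - f (φ j) y) (a' - b') (b' - a')
        (fun j => (hintS j).aestronglyMeasurable) (fun j => ?_) ?_
      · rw [ae_restrict_iff' hSmeas]
        refine Eventually.of_forall fun y hy => ?_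
        have h1 := hFmem y (hSsub hy)
        have h2 := hmap (φ j) y (hSsub hy)
        show F y - f (φ j) y ∈ Set.Icc (a' - b') (b' - a')
        exact ⟨by linarith [h1.1, h2.2], by linarith [h1.2, h2.1]⟩
      · rw [ae_restrict_iff' hSmeas]
        refine Eventually.of_forall fun y hy => ?_
        exact aux_liminf (fun k => (hmap k y (hSsub hy)).1.le)
          (fun k => (hmap k y (hSsub hy)).2.le) (hF y).symm.le hφmono
    have hsplit : ∀ j, ∫ y in I, (F y - f (φ j) y)
        = (∫ y in E, (F y - f (φ j) y)) + ∫ y in S, (F y - f (φ j) y) := by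
      intro j
      rw [← hunion]
      exact setIntegral_union hdisj hSmeas (hintE j) (hintS j)
    have hev : ∀ᶠ j in atTop, ∫ y in I, (F y - f (φ j) y) < r / 2 := by
      have : (0 : ℝ) < r / 2 := by linarith
      exact hDten.eventually (eventually_lt_nhds this)
    have hupper : atTop.liminf (fun j => ∫ y in S, (F y - f (φ j) y)) ≤ -(r / 2) := by
      refine liminf_le_of_frequently_le ?_ ?_
      · refine (hev.mono fun j hj => ?_).frequently
        have := hsplit j
        have := hEbound j
        linarith
      · refine isBoundedUnder_of ⟨(a' - b') * (volume S).toReal, fun j => ?_⟩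
        rw [mul_comm]
        refine setIntegral_ge_of_const_le hSmeas hSfin (fun y hy => ?_) (hintS j)
        have h1 := hFmem y (hSsub hy)
        have h2 := hmap (φ j) y (hSsub hy)
        linarith [h1.1, h2.2]
    linarith
  refine ⟨main, ?_⟩
  -- a.e. statement via countability of discontinuities of antitone extension
  set G : ℝ → ℝ := fun z => if z ≤ a then b' else if b ≤ z then a' else F z with hG
  have hGmem : ∀ z, G z ∈ Set.Icc a' b' := by
    intro z
    by_cases h1 : z ≤ a
    · simp only [hG, if_pos h1]; exact ⟨hab'.le, le_refl _⟩
    · by_cases h2 : b ≤ z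
      · simp only [hG, if_neg h1, if_pos h2]; exact ⟨le_refl _, hab'.le⟩
      · simp only [hG, if_neg h1, if_neg h2]
        exact hFmem z ⟨lt_of_not_ge h1, lt_of_not_ge h2⟩
  have hGeqF : ∀ z ∈ I, G z = F z := by
    intro z hz
    simp only [hG, if_neg (not_le.mpr hz.1), if_neg (not_le.mpr hz.2)]
  have hGanti : Antitone G := by
    intro x y hxy
    by_cases hy1 : y ≤ a
    · have hx1 : x ≤ a := le_trans hxy hy1
      simp only [hG, if_pos hx1, if_pos hy1]; exact le_refl _
    · by_cases hx2 : b ≤ x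
      · have hy2 : b ≤ y := le_trans hx2 hxy
        simp only [hG, if_neg hy1, if_neg (not_le.mpr (lt_of_lt_of_le hab hx2)), if_pos hx2,
          if_pos hy2]
        exact le_refl _
      · by_cases hx1 : x ≤ a
        · have : G x = b' := by simp only [hG, if_pos hx1]
          rw [this]; exact (hGmem y).2
        · by_cases hy2 : b ≤ y
          · have : G y = a' := by simp only [hG, if_neg hy1, if_pos hy2]
            rw [this]; exact (hGmem x).1
          · have hxI : x ∈ I := ⟨lt_of_not_ge hx1, lt_of_not_ge hx2⟩
            have hyI : y ∈ I := ⟨lt_of_not_ge hy1, lt_of_not_ge hy2⟩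
            rw [hGeqF x hxI, hGeqF y hyI]
            exact hFanti hxI hyI hxy
  have hN0 : volume {z | ¬ContinuousAt G z} = 0 :=
    Set.Countable.measure_zero hGanti.countable_not_continuousAt _
  have hae : ∀ᵐ z ∂volume, ContinuousAt G z := by
    rw [ae_iff]
    simpa using hN0
  rw [ae_restrict_iff' hImeas]
  filter_upwards [hae] with x hGx hxI
  refine main x hxI ?_
  have hEq : G =ᶠ[𝓝 x] F := by
    filter_upwards [isOpen_Ioo.mem_nhds hxI] with y hy
    exact hGeqF y hy
  exact (hGx.congr hEq).continuousWithinAt
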